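/- In the game i-Mark({2,4},{2}), for any position n = 6q with q ≥ 2, g(n) = 3 if and only if q ≥ 4 is even and either: q is a power of 2 with even 2-adic valuation, or q is not a power of 2 and has odd 2-adic valuation. -/
import Mathlib


/-- The minimum excludant of a finite set of naturals. -/
noncomputable def mex (s : Finset ℕ) : ℕ := sInf {k : ℕ | k ∉ s}

/-- Options of the game i-Mark(S,D) from a heap of `n` tokens:
move to `n - s` for `s ∈ S` (with `1 ≤ s ≤ n`), or to `n / d` for `d ∈ D`
(with `2 ≤ d` and `d ∣ n`, `n ≥ 1`). -/
def iMarkOptions (S D : Finset ℕ) (n : ℕ) : Finset ℕ :=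
  ((S.filter (fun s => 1 ≤ s ∧ s ≤ n)).image (fun s => n - s)) ∪
  ((D.filter (fun d => 2 ≤ d ∧ d ∣ n ∧ 1 ≤ n)).image (fun d => n / d))

theorem iMarkOptions_lt {S D : Finset ℕ} {n m : ℕ} (h : m ∈ iMarkOptions S D n) : m < n := by
  simp only [iMarkOptions, Finset.mem_union, Finset.mem_image, Finset.mem_filter] at h
  rcases h with ⟨s, ⟨_, h1, h2⟩, rfl⟩ | ⟨d, ⟨_, h2, hd, hn⟩, rfl⟩
  · omega
  · exact Nat.div_lt_self hn h2

/-- The Sprague-Grundy value of a heap of `n` tokens in the game i-Mark(S,D). -/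
noncomputable def grundy (S D : Finset ℕ) (n : ℕ) : ℕ :=
  mex ((iMarkOptions S D n).attach.image (fun m => grundy S D m.1))
termination_by n
decreasing_by exact iMarkOptions_lt m.2

/-- `misereP S D n` means `n` is a P-position of i-Mark(S,D) under misère convention:
`n` has at least one option and every option is an N-position. -/
def misereP (S D : Finset ℕ) (n : ℕ) : Prop :=
  (iMarkOptions S D n).Nonempty ∧
    ∀ m : {x // x ∈ iMarkOptions S D n}, ¬ misereP S D m.1
termination_by n
decreasing_by exact iMarkOptions_lt m.2

lemma mex_eq {s : Finset ℕ} {v : ℕ} (h1 : v ∉ s) (h2 : ∀ k < v, k ∈ s) : mex s = v :=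
  IsLeast.csInf_eq ⟨h1, fun k hk => not_lt.1 fun h => hk (h2 k h)⟩

lemma mex0 : mex (∅ : Finset ℕ) = 0 :=
  mex_eq (Finset.notMem_empty 0) (by intro j hj; omega)
lemma mex1 {a v : ℕ} (h1 : v ≠ a) (h2 : ∀ j, j < v → j = a) : mex {a} = v :=
  mex_eq (by simp; tauto) (by intro j hj; simp; exact h2 j hj)
lemma mex2 {a b v : ℕ} (h1 : v ≠ a) (h2 : v ≠ b) (h3 : ∀ j, j < v → j = a ∨ j = b) :
    mex {a, b} = v :=
  mex_eq (by simp; tauto) (by intro j hj; simp; exact h3 j hj)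
lemma mex3 {a b c v : ℕ} (h1 : v ≠ a) (h2 : v ≠ b) (h3 : v ≠ c)
    (h4 : ∀ j, j < v → j = a ∨ j = b ∨ j = c) : mex {a, b, c} = v :=
  mex_eq (by simp; tauto) (by intro j hj; simp; exact h4 j hj)

lemma grundy_eq (S D n) : grundy S D n = mex ((iMarkOptions S D n).image (grundy S D)) := by
  rw [grundy]; congr 1; ext x; simp [Finset.mem_image]

lemma image_opts_even (n : ℕ) (h4 : 4 ≤ n) (he : 2 ∣ n) (f : ℕ → ℕ) :
    (iMarkOptions {2,4} {2} n).image f = {f (n-2), f (n-4), f (n/2)} := by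
  ext x
  simp only [iMarkOptions, Finset.image_union, Finset.mem_union, Finset.mem_image,
    Finset.mem_filter, Finset.mem_insert, Finset.mem_singleton]
  constructor
  · rintro (⟨y, ⟨s, hs, rfl⟩, rfl⟩ | ⟨y, ⟨d, hd, rfl⟩, rfl⟩)
    · rcases hs.1 with rfl | rfl <;> tauto
    · rcases hd.1 with rfl; tauto
  · rintro (rfl | rfl | rfl)
    · exact Or.inl ⟨n-2, ⟨2, by norm_num; omega⟩, rfl⟩
    · exact Or.inl ⟨n-4, ⟨4, by norm_num; omega⟩, rfl⟩
    · exact Or.inr ⟨n/2, ⟨2, by norm_num; omega⟩, rfl⟩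

lemma image_opts_odd (n : ℕ) (h4 : 4 ≤ n) (ho : ¬ (2 ∣ n)) (f : ℕ → ℕ) :
    (iMarkOptions {2,4} {2} n).image f = {f (n-2), f (n-4)} := by
  ext x
  simp only [iMarkOptions, Finset.image_union, Finset.mem_union, Finset.mem_image,
    Finset.mem_filter, Finset.mem_insert, Finset.mem_singleton]
  constructor
  · rintro (⟨y, ⟨s, hs, rfl⟩, rfl⟩ | ⟨y, ⟨d, hd, rfl⟩, rfl⟩)
    · rcases hs.1 with rfl | rfl <;> tauto
    · rcases hd.1 with rfl; exact absurd hd.2.2.1 ho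
  · rintro (rfl | rfl)
    · exact Or.inl ⟨n-2, ⟨2, by norm_num; omega⟩, rfl⟩
    · exact Or.inl ⟨n-4, ⟨4, by norm_num; omega⟩, rfl⟩

def Cond (q : ℕ) : Prop := 4 ≤ q ∧ Even q ∧
      ((ordCompl[2] q = 1 ∧ Even (padicValNat 2 q)) ∨
       (ordCompl[2] q ≠ 1 ∧ Odd (padicValNat 2 q)))

lemma fac2 (n : ℕ) : Nat.factorization n 2 = padicValNat 2 n :=
  Nat.factorization_def n Nat.prime_two

lemma pv2 : padicValNat 2 2 = 1 := padicValNat.self one_lt_two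

lemma cond_two_mul (m : ℕ) (hm : 2 ≤ m) : Cond (2*m) ↔ ¬ Cond m := by
  haveI : Fact (Nat.Prime 2) := ⟨Nat.prime_two⟩
  have hm0 : m ≠ 0 := by omega
  have hv : padicValNat 2 (2*m) = padicValNat 2 m + 1 := by
    rw [padicValNat.mul two_ne_zero hm0, pv2]; omega
  simp only [Cond, fac2, hv]
  have hdiv : (2*m) / 2 ^ (padicValNat 2 m + 1) = m / 2 ^ padicValNat 2 m := by
    rw [pow_succ, mul_comm (2 ^ padicValNat 2 m) 2, Nat.mul_div_mul_left _ _ two_pos]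
  rw [hdiv]
  generalize ha : padicValNat 2 m = a
  generalize hu : m / 2 ^ a = u
  rcases Nat.even_or_odd m with he | ho
  · rcases eq_or_lt_of_le hm with rfl | h3
    · have ha1 : a = 1 := by rw [← ha]; exact pv2
      have hu1 : u = 1 := by rw [← hu, ha1]; norm_num
      subst ha1 hu1
      constructor
      · intro _ hc; exact absurd hc.1 (by norm_num)
      · intro _
        exact ⟨by norm_num, ⟨2, by norm_num⟩, Or.inl ⟨rfl, ⟨1, by norm_num⟩⟩⟩
    · have h4 : 4 ≤ m := by rcases he with ⟨t, rfl⟩; omega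
      have h42 : 4 ≤ 2*m := by omega
      have he2 : Even (2*m) := ⟨m, by ring⟩
      simp only [Nat.even_add_one, ← Nat.not_even_iff_odd, h4, he, h42, he2,
        true_and, iff_true]
      tauto
  · have hv0 : a = 0 := by
      rw [← ha]
      exact padicValNat.eq_zero_of_not_dvd (by
        rintro ⟨t, rfl⟩; exact (Nat.not_even_iff_odd.mpr ho) ⟨t, by ring⟩)
    have hum : u = m := by rw [← hu, hv0]; norm_num
    subst hv0 hum
    constructor
    · intro _ hc
      exact (Nat.not_even_iff_odd.mpr ho) hc.2.1
    · intro _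
      exact ⟨by omega, even_two_mul _, Or.inr ⟨by omega, odd_one⟩⟩

open Classical in
noncomputable def Fv (k : ℕ) : ℕ := if k ≤ 1 then 0 else if Cond k then 3 else 2

lemma Fv_zero : Fv 0 = 0 := by simp [Fv]
lemma Fv_one : Fv 1 = 0 := by simp [Fv]
lemma Fv_two : Fv 2 = 2 := by
  unfold Fv
  rw [if_neg (by omega), if_neg (fun hc => by have := hc.1; omega)]
lemma Fv_mem {k : ℕ} (h : 2 ≤ k) : Fv k = 2 ∨ Fv k = 3 := by
  unfold Fv
  rw [if_neg (by omega)]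
  by_cases hc : Cond k
  · rw [if_pos hc]; tauto
  · rw [if_neg hc]; tauto
lemma Fv_odd {k : ℕ} (h : ¬ Even k) (h2 : 2 ≤ k) : Fv k = 2 := by
  unfold Fv
  rw [if_neg (by omega), if_neg (fun hc => h hc.2.1)]
lemma Fv_double2 {m : ℕ} (hm : 2 ≤ m) (h : Fv m = 2) : Fv (2*m) = 3 := by
  have hc : ¬ Cond m := by
    intro hc
    unfold Fv at h
    rw [if_neg (by omega), if_pos hc] at h
    omega
  unfold Fv
  rw [if_neg (by omega), if_pos ((cond_two_mul m hm).mpr hc)]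
lemma Fv_double3 {m : ℕ} (hm : 2 ≤ m) (h : Fv m = 3) : Fv (2*m) = 2 := by
  have hc : Cond m := by
    by_contra hc
    unfold Fv at h
    rw [if_neg (by omega), if_neg hc] at h
    omega
  unfold Fv
  rw [if_neg (by omega), if_neg (fun h2 => ((cond_two_mul m hm).mp h2) hc)]

noncomputable def val (n : ℕ) : ℕ :=
  if n % 6 = 1 then 0
  else if n % 6 = 2 then 1
  else if n % 6 = 3 then 1
  else if n % 6 = 4 then (if n / 6 = 0 then 2 else if n / 6 = 1 then 3 else 0)
  else if n % 6 = 5 then 2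
  else Fv (n / 6)

lemma val_r1 (k : ℕ) : val (6*k+1) = 0 := by
  unfold val; rw [if_pos (by omega)]
lemma val_r2 (k : ℕ) : val (6*k+2) = 1 := by
  unfold val; rw [if_neg (by omega), if_pos (by omega)]
lemma val_r3 (k : ℕ) : val (6*k+3) = 1 := by
  unfold val; rw [if_neg (by omega), if_neg (by omega), if_pos (by omega)]
lemma val_r5 (k : ℕ) : val (6*k+5) = 2 := by
  unfold val
  rw [if_neg (by omega), if_neg (by omega), if_neg (by omega), if_neg (by omega),
    if_pos (by omega)]
lemma val_r4 (k : ℕ) (h : 2 ≤ k) : val (6*k+4) = 0 := by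
  unfold val
  rw [if_neg (by omega), if_neg (by omega), if_neg (by omega), if_pos (by omega),
    if_neg (by omega), if_neg (by omega)]
lemma val_r0 (k : ℕ) : val (6*k) = Fv k := by
  unfold val
  rw [if_neg (by omega), if_neg (by omega), if_neg (by omega), if_neg (by omega),
    if_neg (by omega)]
  congr 1
  omega
lemma val0 : val 0 = 0 := by rw [show (0:ℕ) = 6*0 from rfl, val_r0, Fv_zero]
lemma val1 : val 1 = 0 := val_r1 0
lemma val2 : val 2 = 1 := val_r2 0
lemma val3 : val 3 = 1 := val_r3 0
lemma val4 : val 4 = 2 := by norm_num [val]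
lemma val5 : val 5 = 2 := val_r5 0
lemma val6 : val 6 = 0 := by rw [show (6:ℕ) = 6*1 from rfl, val_r0, Fv_one]
lemma val8 : val 8 = 1 := val_r2 1
lemma val10 : val 10 = 3 := by norm_num [val]
lemma val12 : val 12 = 2 := by rw [show (12:ℕ) = 6*2 from rfl, val_r0, Fv_two]

lemma grundy_val : ∀ n, grundy {2,4} {2} n = val n := by
  intro n
  induction n using Nat.strong_induction_on with
  | _ n IH =>
  obtain ⟨k, r, hr, rfl⟩ : ∃ k r, r < 6 ∧ n = 6*k+r :=
    ⟨n/6, n%6, Nat.mod_lt _ (by norm_num), by omega⟩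
  interval_cases r
  -- r = 0
  · rw [show 6*k+0 = 6*k from by omega]
    by_cases hk0 : k = 0
    · subst hk0
      rw [show 6*0 = 0 from by norm_num, val0, grundy_eq,
        show iMarkOptions {2,4} {2} 0 = ∅ from by decide, Finset.image_empty, mex0]
    by_cases hk1 : k = 1
    · subst hk1
      rw [show 6*1 = 6 from by norm_num, val6, grundy_eq,
        image_opts_even 6 (by omega) (by omega),
        show 6-2 = 4 from by norm_num, show 6-4 = 2 from by norm_num,
        show 6/2 = 3 from by norm_num,
        IH 4 (by omega), IH 2 (by omega), IH 3 (by omega), val4, val2, val3]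
      exact mex3 (by omega) (by omega) (by omega) (by intro j hj; omega)
    by_cases hk2 : k = 2
    · subst hk2
      rw [show 6*2 = 12 from by norm_num, val12, grundy_eq,
        image_opts_even 12 (by omega) (by omega),
        show 12-2 = 10 from by norm_num, show 12-4 = 8 from by norm_num,
        show 12/2 = 6 from by norm_num,
        IH 10 (by omega), IH 8 (by omega), IH 6 (by omega), val10, val8, val6]
      exact mex3 (by omega) (by omega) (by omega) (by intro j hj; omega)
    rcases Nat.even_or_odd k with ⟨t, rfl⟩ | ⟨t, rfl⟩
    · -- k = t + t even, t ≥ 2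
      have ht : 2 ≤ t := by omega
      rw [val_r0, grundy_eq, image_opts_even _ (by omega) (by omega),
        show 6*(t+t)-2 = 6*(t+t-1)+4 from by omega,
        show 6*(t+t)-4 = 6*(t+t-1)+2 from by omega,
        show 6*(t+t)/2 = 6*t from by omega,
        IH (6*(t+t-1)+4) (by omega), IH (6*(t+t-1)+2) (by omega), IH (6*t) (by omega),
        val_r4 _ (by omega), val_r2, val_r0]
      rcases Fv_mem ht with h2 | h2
      · rw [h2, show Fv (t+t) = 3 from by
          rw [show t+t = 2*t from by omega]; exact Fv_double2 ht h2]
        exact mex3 (by omega) (by omega) (by omega) (by intro j hj; omega)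
      · rw [h2, show Fv (t+t) = 2 from by
          rw [show t+t = 2*t from by omega]; exact Fv_double3 ht h2]
        exact mex3 (by omega) (by omega) (by omega) (by intro j hj; omega)
    · -- k = 2t+1 odd, t ≥ 1
      have ht : 1 ≤ t := by omega
      rw [val_r0, Fv_odd (by simp [Nat.even_add_one, Nat.even_mul]) (by omega),
        grundy_eq, image_opts_even _ (by omega) (by omega),
        show 6*(2*t+1)-2 = 6*(2*t)+4 from by omega,
        show 6*(2*t+1)-4 = 6*(2*t)+2 from by omega,
        show 6*(2*t+1)/2 = 6*t+3 from by omega,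
        IH (6*(2*t)+4) (by omega), IH (6*(2*t)+2) (by omega), IH (6*t+3) (by omega),
        val_r4 _ (by omega), val_r2, val_r3]
      exact mex3 (by omega) (by omega) (by omega) (by intro j hj; omega)
  -- r = 1
  · by_cases hk : k = 0
    · subst hk
      rw [show 6*0+1 = 1 from by norm_num, val1, grundy_eq,
        show iMarkOptions {2,4} {2} 1 = ∅ from by decide, Finset.image_empty, mex0]
    · rw [val_r1, grundy_eq, image_opts_odd _ (by omega) (by omega),
        show 6*k+1-2 = 6*(k-1)+5 from by omega, show 6*k+1-4 = 6*(k-1)+3 from by omega,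
        IH (6*(k-1)+5) (by omega), IH (6*(k-1)+3) (by omega), val_r5, val_r3]
      exact mex2 (by omega) (by omega) (by intro j hj; omega)
  -- r = 2
  · by_cases hk0 : k = 0
    · subst hk0
      rw [show 6*0+2 = 2 from by norm_num, val2, grundy_eq,
        show iMarkOptions {2,4} {2} 2 = {0, 1} from by decide,
        Finset.image_insert, Finset.image_singleton,
        IH 0 (by omega), IH 1 (by omega), val0, val1]
      exact mex2 (by omega) (by omega) (by intro j hj; omega)
    by_cases hk1 : k = 1
    · subst hk1
      rw [show 6*1+2 = 8 from by norm_num, val8, grundy_eq,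
        image_opts_even 8 (by omega) (by omega),
        show 8-2 = 6 from by norm_num, show 8-4 = 4 from by norm_num,
        show 8/2 = 4 from by norm_num,
        IH 6 (by omega), IH 4 (by omega), val6, val4]
      exact mex3 (by omega) (by omega) (by omega) (by intro j hj; omega)
    by_cases hk2 : k = 2
    · subst hk2
      rw [val_r2, show 6*2+2 = 14 from by norm_num, grundy_eq,
        image_opts_even 14 (by omega) (by omega),
        show 14-2 = 12 from by norm_num, show 14-4 = 10 from by norm_num,
        show 14/2 = 6*1+1 from by norm_num,
        IH 12 (by omega), IH 10 (by omega), IH (6*1+1) (by omega), val12, val10, val_r1]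
      exact mex3 (by omega) (by omega) (by omega) (by intro j hj; omega)
    by_cases hk3 : k = 3
    · subst hk3
      rw [val_r2, show 6*3+2 = 20 from by norm_num, grundy_eq,
        image_opts_even 20 (by omega) (by omega),
        show 20-2 = 6*3 from by norm_num, show 20-4 = 6*2+4 from by norm_num,
        show 20/2 = 10 from by norm_num,
        IH (6*3) (by omega), IH (6*2+4) (by omega), IH 10 (by omega),
        val_r0, val_r4 _ (by omega), val10,
        Fv_odd (by simp [Nat.even_iff]) (by omega)]
      exact mex3 (by omega) (by omega) (by omega) (by intro j hj; omega)
    · -- k ≥ 4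
      rw [val_r2, grundy_eq, image_opts_even _ (by omega) (by omega),
        show 6*k+2-2 = 6*k from by omega, show 6*k+2-4 = 6*(k-1)+4 from by omega,
        IH (6*k) (by omega), IH (6*(k-1)+4) (by omega), val_r0, val_r4 _ (by omega)]
      rcases Nat.even_or_odd k with ⟨t, rfl⟩ | ⟨t, rfl⟩
      · rw [show (6*(t+t)+2)/2 = 6*t+1 from by omega, IH (6*t+1) (by omega), val_r1]
        rcases Fv_mem (show 2 ≤ t+t from by omega) with h2 | h2 <;> rw [h2] <;>
          exact mex3 (by omega) (by omega) (by omega) (by intro j hj; omega)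
      · rw [show (6*(2*t+1)+2)/2 = 6*t+4 from by omega, IH (6*t+4) (by omega),
          val_r4 _ (by omega)]
        rcases Fv_mem (show 2 ≤ 2*t+1 from by omega) with h2 | h2 <;> rw [h2] <;>
          exact mex3 (by omega) (by omega) (by omega) (by intro j hj; omega)
  -- r = 3
  · by_cases hk : k = 0
    · subst hk
      rw [show 6*0+3 = 3 from by norm_num, val3, grundy_eq,
        show iMarkOptions {2,4} {2} 3 = {1} from by decide, Finset.image_singleton,
        IH 1 (by omega), val1]
      exact mex1 (by omega) (by intro j hj; omega)
    · rw [val_r3, grundy_eq, image_opts_odd _ (by omega) (by omega),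
        show 6*k+3-2 = 6*k+1 from by omega, show 6*k+3-4 = 6*(k-1)+5 from by omega,
        IH (6*k+1) (by omega), IH (6*(k-1)+5) (by omega), val_r1, val_r5]
      exact mex2 (by omega) (by omega) (by intro j hj; omega)
  -- r = 4
  · by_cases hk0 : k = 0
    · subst hk0
      rw [show 6*0+4 = 4 from by norm_num, val4, grundy_eq,
        image_opts_even 4 (by omega) (by omega),
        show 4-2 = 2 from by norm_num, show 4-4 = 0 from by norm_num,
        show 4/2 = 2 from by norm_num,
        IH 2 (by omega), IH 0 (by omega), val2, val0]
      exact mex3 (by omega) (by omega) (by omega) (by intro j hj; omega)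
    by_cases hk1 : k = 1
    · subst hk1
      rw [show 6*1+4 = 10 from by norm_num, val10, grundy_eq,
        image_opts_even 10 (by omega) (by omega),
        show 10-2 = 8 from by norm_num, show 10-4 = 6 from by norm_num,
        show 10/2 = 5 from by norm_num,
        IH 8 (by omega), IH 6 (by omega), IH 5 (by omega), val8, val6, val5]
      exact mex3 (by omega) (by omega) (by omega) (by intro j hj; omega)
    · -- k ≥ 2
      rw [val_r4 _ (by omega), grundy_eq, image_opts_even _ (by omega) (by omega),
        show 6*k+4-2 = 6*k+2 from by omega, show 6*k+4-4 = 6*k from by omega,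
        IH (6*k+2) (by omega), IH (6*k) (by omega), val_r2, val_r0]
      rcases Nat.even_or_odd k with ⟨t, rfl⟩ | ⟨t, rfl⟩
      · rw [show (6*(t+t)+4)/2 = 6*t+2 from by omega, IH (6*t+2) (by omega), val_r2]
        rcases Fv_mem (show 2 ≤ t+t from by omega) with h2 | h2 <;> rw [h2] <;>
          exact mex3 (by omega) (by omega) (by omega) (by intro j hj; omega)
      · rw [show (6*(2*t+1)+4)/2 = 6*t+5 from by omega, IH (6*t+5) (by omega), val_r5]
        rcases Fv_mem (show 2 ≤ 2*t+1 from by omega) with h2 | h2 <;> rw [h2] <;>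
          exact mex3 (by omega) (by omega) (by omega) (by intro j hj; omega)
  -- r = 5
  · rw [val_r5, grundy_eq, image_opts_odd _ (by omega) (by omega)]
    rw [show 6*k+5-2 = 6*k+3 from by omega, show 6*k+5-4 = 6*k+1 from by omega,
      IH (6*k+3) (by omega), IH (6*k+1) (by omega), val_r3, val_r1]
    exact mex2 (by omega) (by omega) (by intro j hj; omega)

/-- Characterization of positions of g-value 3 in i-Mark({2,4},{2}). -/
theorem iMark_24_2_grundy_eq_three (q : ℕ) (hq : 2 ≤ q) :
    grundy {2, 4} {2} (6 * q) = 3 ↔ 4 ≤ q ∧ Even q ∧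
      ((ordCompl[2] q = 1 ∧ Even (padicValNat 2 q)) ∨
       (ordCompl[2] q ≠ 1 ∧ Odd (padicValNat 2 q))) := by
  rw [grundy_val, val_r0]
  unfold Fv
  rw [if_neg (by omega)]
  constructor
  · intro h
    by_cases hc : Cond q
    · exact hc
    · rw [if_neg hc] at h; omega
  · intro h
    rw [if_pos (show Cond q from h)]
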